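/- arXiv:2204.08456 — 2 statements merged into one kernel-verified Lean document; each statement's English description precedes it below -/
import Mathlib

section
/- There exists a constant C depending only on d̄ such that for every integer N ≥ 2|d̄|, all 0 ≤ S ≤ T ≤ 1, all x, y ∈ 𝕋_N, and every real ν ∈ [0,1], one has N^ν · (T−S)^{ν/2} · H^N_{S,T,x,y} ≤ C. -/
open MeasureTheory

/-- The generator matrix `L_N` of the discrete heat flow with drift: acting on a function
`φ : ZMod N → ℝ` (as `mulVec`), it gives
`L_N φ (x) = (N²/2)(φ(x+1) + φ(x−1) − 2φ(x)) + d̄·N·(φ(x−1) − φ(x))`. -/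
noncomputable def genMat (N : ℕ) (dbar : ℝ) : Matrix (ZMod N) (ZMod N) ℝ :=
  Matrix.of fun x y =>
    ((N : ℝ) ^ 2 / 2) * ((if y = x + 1 then 1 else 0) + (if y = x - 1 then 1 else 0))
      + dbar * (N : ℝ) * (if y = x - 1 then 1 else 0)
      - ((N : ℝ) ^ 2 + dbar * (N : ℝ)) * (if y = x then 1 else 0)

/-- The discrete heat kernel `H^N_{S,T,x,y}`: the `(x,y)` entry of `exp((T−S)·L_N)`. -/
noncomputable def heatKer (N : ℕ) [NeZero N] (dbar : ℝ) (S T : ℝ) (x y : ZMod N) : ℝ :=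
  NormedSpace.exp ((T - S) • genMat N dbar) x y

namespace HeatAux

open NormedSpace Finset Complex

variable {N : ℕ} [NeZero N]

/-- The DFT matrix. -/
noncomputable def Fmat (N : ℕ) [NeZero N] : Matrix (ZMod N) (ZMod N) ℂ :=
  Matrix.of fun x k => ZMod.stdAddChar (x * k)

/-- The inverse DFT matrix (up to `N⁻¹`). -/
noncomputable def Gmat (N : ℕ) [NeZero N] : Matrix (ZMod N) (ZMod N) ℂ :=
  Matrix.of fun k y => ZMod.stdAddChar (-(k * y))

lemma orth (t : ZMod N) : ∑ k : ZMod N, ZMod.stdAddChar (t * k) = if t = 0 then (N : ℂ) else 0 := by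
  split_ifs with h
  · simp only [h, zero_mul, AddChar.map_zero_eq_one, sum_const, card_univ, ZMod.card,
      nsmul_eq_mul, mul_one]
  · have := AddChar.sum_eq_zero_of_ne_one (ZMod.isPrimitive_stdAddChar N h)
    simpa only [AddChar.mulShift_apply] using this

lemma FG : Fmat N * Gmat N = (N : ℂ) • 1 := by
  ext x y
  simp only [Matrix.mul_apply, Fmat, Gmat, Matrix.of_apply, Matrix.smul_apply,
    Matrix.one_apply, smul_eq_mul]
  have : ∀ k : ZMod N, ZMod.stdAddChar (x * k) * ZMod.stdAddChar (-(k * y))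
      = ZMod.stdAddChar ((x - y) * k) := by
    intro k
    rw [← AddChar.map_add_eq_mul]
    congr 1
    ring
  rw [Finset.sum_congr rfl fun k _ => this k, orth]
  split_ifs with h h2 h3
  · simp
  · exact absurd (sub_eq_zero.mp h) h2
  · exact absurd (sub_eq_zero.mpr h3) h
  · simp

lemma F_mul_inv : Fmat N * ((N : ℂ)⁻¹ • Gmat N) = 1 := by
  have hN : (N : ℂ) ≠ 0 := Nat.cast_ne_zero.mpr (NeZero.ne N)
  rw [Matrix.mul_smul, FG, smul_smul, inv_mul_cancel₀ hN, one_smul]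

lemma isUnit_F : IsUnit (Fmat N) :=
  Matrix.isUnit_iff_isUnit_det _ |>.mpr (Matrix.isUnit_det_of_right_inverse F_mul_inv)

lemma F_inv : (Fmat N)⁻¹ = (N : ℂ)⁻¹ • Gmat N := Matrix.inv_eq_right_inv F_mul_inv

/-- Eigenvalues of the (complexified) generator. -/
noncomputable def eigg (N : ℕ) [NeZero N] (dbar : ℝ) (k : ZMod N) : ℂ :=
  ((N : ℂ) ^ 2 / 2) * (ZMod.stdAddChar k + ZMod.stdAddChar (-k) - 2)
    + (dbar : ℂ) * N * (ZMod.stdAddChar (-k) - 1)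

lemma gen_mul_F (dbar : ℝ) :
    (genMat N dbar).map (algebraMap ℝ ℂ) * Fmat N
      = Fmat N * Matrix.diagonal (eigg N dbar) := by
  ext x k
  rw [Matrix.mul_diagonal]
  simp only [Matrix.mul_apply, Matrix.map_apply, genMat, Fmat, Matrix.of_apply, eigg]
  have expand : ∀ y : ZMod N,
      (algebraMap ℝ ℂ) (((N : ℝ) ^ 2 / 2) * ((if y = x + 1 then (1:ℝ) else 0) + (if y = x - 1 then 1 else 0))
        + dbar * (N : ℝ) * (if y = x - 1 then 1 else 0)
        - ((N : ℝ) ^ 2 + dbar * (N : ℝ)) * (if y = x then 1 else 0)) * ZMod.stdAddChar (y * k)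
      = ((N : ℂ) ^ 2 / 2) * ((if y = x + 1 then ZMod.stdAddChar (y * k) else 0)
          + (if y = x - 1 then ZMod.stdAddChar (y * k) else 0))
        + (dbar : ℂ) * N * (if y = x - 1 then ZMod.stdAddChar (y * k) else 0)
        - ((N : ℂ) ^ 2 + (dbar : ℂ) * N) * (if y = x then ZMod.stdAddChar (y * k) else 0) := by
    intro y
    simp only [Complex.coe_algebraMap]
    push_cast
    split_ifs <;> push_cast <;> ring
  rw [Finset.sum_congr rfl fun y _ => expand y]
  rw [Finset.sum_sub_distrib, Finset.sum_add_distrib, ← Finset.mul_sum, ← Finset.mul_sum,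
    ← Finset.mul_sum, Finset.sum_add_distrib]
  simp only [Finset.sum_ite_eq' Finset.univ, Finset.mem_univ, if_true]
  have h1 : ZMod.stdAddChar ((x + 1) * k) = ZMod.stdAddChar (x * k) * ZMod.stdAddChar k := by
    rw [← AddChar.map_add_eq_mul]; congr 1; ring
  have h2 : ZMod.stdAddChar ((x - 1) * k) = ZMod.stdAddChar (x * k) * ZMod.stdAddChar (-k) := by
    rw [← AddChar.map_add_eq_mul]; congr 1; ring
  rw [h1, h2]
  ring

lemma abs_std (k : ZMod N) : ‖ZMod.stdAddChar k‖ = 1 := by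
  rw [ZMod.stdAddChar_apply]; exact Circle.norm_coe _

lemma re_std (k : ZMod N) : (ZMod.stdAddChar k).re = Real.cos (2*Real.pi*(k.val)/N) := by
  have h : ((k.val : ℤ) : ZMod N) = k := by
    push_cast
    exact ZMod.natCast_rightInverse k
  conv_lhs => rw [← h]
  rw [ZMod.stdAddChar_coe]
  have : 2 * (Real.pi:ℂ) * Complex.I * ((k.val:ℤ):ℂ) / (N:ℂ)
      = ((2*Real.pi*(k.val)/N : ℝ) : ℂ) * Complex.I := by
    push_cast; ring
  rw [this, Complex.exp_ofReal_mul_I_re]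

lemma re_eigg (dbar : ℝ) (k : ZMod N) :
    (eigg N dbar k).re = ((N:ℝ)^2 + dbar*N) * ((ZMod.stdAddChar k).re - 1) := by
  have hconj : ZMod.stdAddChar (-k) = (starRingEnd ℂ) (ZMod.stdAddChar k) := by
    rw [AddChar.map_neg_eq_inv, Complex.inv_eq_conj]
    rw [abs_std]
  simp only [eigg, hconj]
  simp [Complex.add_re, Complex.sub_re, Complex.mul_re, Complex.conj_re, Complex.conj_im,
    Complex.ofReal_re, Complex.ofReal_im, Complex.natCast_re, Complex.natCast_im, pow_two]
  ring

lemma expR_eq (z : ℂ) : NormedSpace.exp z = Complex.exp z := by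
  rw [Complex.exp_eq_exp_ℂ]

lemma exp_map_comm (t dbar : ℝ) :
    (NormedSpace.exp (t • genMat N dbar)).map (algebraMap ℝ ℂ)
      = NormedSpace.exp ((t • genMat N dbar).map (algebraMap ℝ ℂ)) := by
  letI : SeminormedRing (Matrix (ZMod N) (ZMod N) ℝ) := Matrix.linftyOpSemiNormedRing
  letI : NormedRing (Matrix (ZMod N) (ZMod N) ℝ) := Matrix.linftyOpNormedRing
  letI : NormedAlgebra ℝ (Matrix (ZMod N) (ZMod N) ℝ) := Matrix.linftyOpNormedAlgebra
  letI : SeminormedRing (Matrix (ZMod N) (ZMod N) ℂ) := Matrix.linftyOpSemiNormedRing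
  letI : NormedRing (Matrix (ZMod N) (ZMod N) ℂ) := Matrix.linftyOpNormedRing
  letI : NormedAlgebra ℝ (Matrix (ZMod N) (ZMod N) ℂ) := Matrix.linftyOpNormedAlgebra
  letI : NormedAlgebra ℚ (Matrix (ZMod N) (ZMod N) ℝ) := Matrix.linftyOpNormedAlgebra
  letI : NormedAlgebra ℚ (Matrix (ZMod N) (ZMod N) ℂ) := Matrix.linftyOpNormedAlgebra
  have hcont : Continuous ((algebraMap ℝ ℂ).mapMatrix :
      Matrix (ZMod N) (ZMod N) ℝ →+* Matrix (ZMod N) (ZMod N) ℂ) := by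
    have : ⇑((algebraMap ℝ ℂ).mapMatrix :
        Matrix (ZMod N) (ZMod N) ℝ →+* Matrix (ZMod N) (ZMod N) ℂ)
        = fun M : Matrix (ZMod N) (ZMod N) ℝ => M.map (algebraMap ℝ ℂ) := by
      funext M; rfl
    rw [this]
    exact continuous_id.matrix_map (continuous_algebraMap ℝ ℂ)
  exact map_exp ((algebraMap ℝ ℂ).mapMatrix) hcont _

lemma exp_eq_diag (t dbar : ℝ) :
    NormedSpace.exp ((t • genMat N dbar).map (algebraMap ℝ ℂ))
      = Fmat N * Matrix.diagonal (fun k => Complex.exp ((t:ℂ) * eigg N dbar k)) * (Fmat N)⁻¹ := by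
  have hd : IsUnit (Fmat N).det := (Matrix.isUnit_iff_isUnit_det _).mp isUnit_F
  have hAc : (genMat N dbar).map (algebraMap ℝ ℂ)
      = Fmat N * Matrix.diagonal (eigg N dbar) * (Fmat N)⁻¹ := by
    rw [← gen_mul_F dbar, Matrix.mul_nonsing_inv_cancel_right _ _ hd]
  have hsm : (t • genMat N dbar).map (algebraMap ℝ ℂ)
      = Fmat N * Matrix.diagonal (fun k => (t:ℂ) * eigg N dbar k) * (Fmat N)⁻¹ := by
    have h1 : (t • genMat N dbar).map (algebraMap ℝ ℂ)
        = (t:ℂ) • ((genMat N dbar).map (algebraMap ℝ ℂ)) := by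
      ext i j
      simp [Matrix.map_apply, Matrix.smul_apply, Complex.coe_algebraMap]
    rw [h1, hAc]
    have h2 : (t:ℂ) • (Fmat N * Matrix.diagonal (eigg N dbar) * (Fmat N)⁻¹)
        = Fmat N * ((t:ℂ) • Matrix.diagonal (eigg N dbar)) * (Fmat N)⁻¹ := by
      rw [Matrix.mul_smul, Matrix.smul_mul]
    rw [h2, ← Matrix.diagonal_smul]
    rfl
  rw [hsm, Matrix.exp_conj _ _ isUnit_F, Matrix.exp_diagonal]
  have hfun : NormedSpace.exp (fun k => (t:ℂ) * eigg N dbar k)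
      = fun k => Complex.exp ((t:ℂ) * eigg N dbar k) := by
    funext k
    rw [Pi.coe_exp, expR_eq]
  rw [hfun]

lemma entry_le (dbar t : ℝ) (x y : ZMod N) :
    NormedSpace.exp (t • genMat N dbar) x y
      ≤ (N:ℝ)⁻¹ * ∑ k : ZMod N,
          Real.exp (t * (((N:ℝ)^2 + dbar*(N:ℝ)) * (Real.cos (2*Real.pi*(k.val)/N) - 1))) := by
  have hentry : ((NormedSpace.exp (t • genMat N dbar) x y : ℝ) : ℂ)
      = (N:ℂ)⁻¹ * ∑ k : ZMod N, ZMod.stdAddChar (x*k) * Complex.exp ((t:ℂ) * eigg N dbar k)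
          * ZMod.stdAddChar (-(k*y)) := by
    have h0 : ((NormedSpace.exp (t • genMat N dbar)).map (algebraMap ℝ ℂ)) x y
        = ((NormedSpace.exp (t • genMat N dbar) x y : ℝ) : ℂ) := by
      simp [Matrix.map_apply, Complex.coe_algebraMap]
    rw [← h0, exp_map_comm, exp_eq_diag, F_inv, Matrix.mul_smul, Matrix.smul_apply,
      Matrix.mul_apply]
    rw [smul_eq_mul]
    congr 1
    refine Finset.sum_congr rfl fun k _ => ?_
    rw [Matrix.mul_diagonal]
    simp [Fmat, Gmat, Matrix.of_apply]
  have habs : NormedSpace.exp (t • genMat N dbar) x y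
      ≤ ‖((N:ℂ)⁻¹ * ∑ k : ZMod N, ZMod.stdAddChar (x*k)
          * Complex.exp ((t:ℂ) * eigg N dbar k) * ZMod.stdAddChar (-(k*y)))‖ := by
    calc NormedSpace.exp (t • genMat N dbar) x y
        = (((NormedSpace.exp (t • genMat N dbar) x y : ℝ) : ℂ)).re := by simp
      _ ≤ ‖((NormedSpace.exp (t • genMat N dbar) x y : ℝ) : ℂ)‖ := Complex.re_le_norm _
      _ = _ := by rw [hentry]
  refine habs.trans ?_
  rw [norm_mul]
  have h1 : ‖((N:ℂ)⁻¹)‖ = (N:ℝ)⁻¹ := by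
    rw [norm_inv, Complex.norm_natCast]
  rw [h1]
  refine mul_le_mul_of_nonneg_left ?_ (by positivity)
  refine (norm_sum_le _ _).trans ?_
  refine Finset.sum_le_sum fun k _ => ?_
  rw [norm_mul, norm_mul, abs_std, abs_std, one_mul, mul_one, Complex.norm_exp]
  have : ((t:ℂ) * eigg N dbar k).re = t * (((N:ℝ)^2 + dbar*(N:ℝ))
      * (Real.cos (2*Real.pi*(k.val)/N) - 1)) := by
    rw [Complex.re_ofReal_mul, re_eigg, re_std]
  rw [this]


/-! ### Scalar estimates -/

lemma exp_neg_le_inv (x : ℝ) (hx : 0 ≤ x) : Real.exp (-x) ≤ (1 + x)⁻¹ := by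
  rw [Real.exp_neg]
  have h1 : 1 + x ≤ Real.exp x := by linarith [Real.add_one_le_exp x]
  exact inv_anti₀ (by linarith) h1

lemma core_bound (N m : ℕ) (hN0 : N ≠ 0) (h2 : 2 * m ≤ N) (t c : ℝ) (ht : 0 ≤ t)
    (hc : t * (N:ℝ)^2 / 2 ≤ c) :
    Real.exp (c * (Real.cos (2*Real.pi*(m:ℝ)/N) - 1)) ≤ (1 + 4*t*(m:ℝ)^2)⁻¹ := by
  have hNpos : (0:ℝ) < N := by
    exact_mod_cast Nat.pos_of_ne_zero hN0
  set θ := 2*Real.pi*(m:ℝ)/N with hθdef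
  have hpi := Real.pi_pos
  have hθ0 : 0 ≤ θ := by positivity
  have h2m : (2*(m:ℝ)) ≤ (N:ℝ) := by exact_mod_cast h2
  have hθπ : θ ≤ Real.pi := by
    rw [hθdef, div_le_iff₀ hNpos]
    nlinarith
  have hcos : Real.cos θ ≤ 1 - 2/Real.pi^2*θ^2 :=
    Real.cos_le_one_sub_mul_cos_sq (by rwa [_root_.abs_of_nonneg hθ0])
  have hval : 2/Real.pi^2*θ^2 = 8*(m:ℝ)^2/(N:ℝ)^2 := by
    rw [hθdef]
    field_simp
    ring
  have hcge : 8*(m:ℝ)^2/(N:ℝ)^2 ≤ 1 - Real.cos θ := by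
    rw [← hval]; linarith
  have hc0 : 0 ≤ c := le_trans (by positivity) hc
  have h1 : c * (Real.cos θ - 1) ≤ -(4*t*(m:ℝ)^2) := by
    have hmul : (t * (N:ℝ)^2/2) * (8*(m:ℝ)^2/(N:ℝ)^2) ≤ c * (1 - Real.cos θ) :=
      mul_le_mul hc hcge (by positivity) hc0
    have heq : (t * (N:ℝ)^2/2) * (8*(m:ℝ)^2/(N:ℝ)^2) = 4*t*(m:ℝ)^2 := by
      field_simp
      ring
    nlinarith
  calc Real.exp (c * (Real.cos θ - 1)) ≤ Real.exp (-(4*t*(m:ℝ)^2)) := Real.exp_le_exp.mpr h1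
    _ ≤ (1 + 4*t*(m:ℝ)^2)⁻¹ := exp_neg_le_inv _ (by positivity)

lemma bound_j (N j : ℕ) (hN0 : N ≠ 0) (hj : j < N) (t c : ℝ) (ht : 0 ≤ t)
    (hc : t * (N:ℝ)^2 / 2 ≤ c) :
    Real.exp (c * (Real.cos (2*Real.pi*(j:ℝ)/N) - 1))
      ≤ (1 + 4*t*(j:ℝ)^2)⁻¹ + (1 + 4*t*((N - j : ℕ):ℝ)^2)⁻¹ := by
  rcases le_or_gt (2*j) N with h2 | h2
  · have h := core_bound N j hN0 h2 t c ht hc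
    have : (0:ℝ) ≤ (1 + 4*t*((N - j : ℕ):ℝ)^2)⁻¹ := by positivity
    linarith
  · have hNj : N - j < N := Nat.sub_lt (Nat.pos_of_ne_zero hN0) (by omega)
    have h2' : 2 * (N - j) ≤ N := by omega
    have hcast : ((N - j : ℕ):ℝ) = (N:ℝ) - (j:ℝ) := by
      rw [Nat.cast_sub hj.le]
    have hNpos : (0:ℝ) < N := by exact_mod_cast Nat.pos_of_ne_zero hN0
    have hcoseq : Real.cos (2*Real.pi*(j:ℝ)/N) = Real.cos (2*Real.pi*((N - j : ℕ):ℝ)/N) := by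
      have harg : 2*Real.pi*((N - j : ℕ):ℝ)/N = 2*Real.pi - 2*Real.pi*(j:ℝ)/N := by
        rw [hcast]
        field_simp
      rw [harg, Real.cos_two_pi_sub]
    rw [hcoseq]
    have h := core_bound N (N - j) hN0 h2' t c ht hc
    have : (0:ℝ) ≤ (1 + 4*t*(j:ℝ)^2)⁻¹ := by positivity
    linarith

lemma sum_inv_quad_le (a : ℝ) (ha : 0 < a) (M : ℕ) :
    ∑ j ∈ Finset.Ioc 0 M, (1 + a*(j:ℝ)^2)⁻¹ ≤ 2*(Real.sqrt a)⁻¹ + 1 := by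
  have hsq : 0 < Real.sqrt a := Real.sqrt_pos.mpr ha
  set s := (Real.sqrt a)⁻¹ with hsdef
  have hs0 : 0 < s := by positivity
  set m0 := ⌈s⌉₊ with hm0def
  have hm01 : 1 ≤ m0 := Nat.one_le_ceil_iff.mpr hs0
  have hm0s : s ≤ (m0:ℝ) := Nat.le_ceil s
  have hm0s1 : (m0:ℝ) ≤ s + 1 := (Nat.ceil_lt_add_one hs0.le).le
  set K := max m0 M with hKdef
  have hstep1 : ∑ j ∈ Finset.Ioc 0 M, (1 + a*(j:ℝ)^2)⁻¹
      ≤ ∑ j ∈ Finset.Ioc 0 K, (1 + a*(j:ℝ)^2)⁻¹ :=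
    Finset.sum_le_sum_of_subset_of_nonneg
      (Finset.Ioc_subset_Ioc le_rfl (le_max_right _ _)) (fun i _ _ => by positivity)
  have hsplit : ∑ j ∈ Finset.Ioc 0 m0, (1 + a*(j:ℝ)^2)⁻¹
      + ∑ j ∈ Finset.Ioc m0 K, (1 + a*(j:ℝ)^2)⁻¹ = ∑ j ∈ Finset.Ioc 0 K, (1 + a*(j:ℝ)^2)⁻¹ :=
    Finset.sum_Ioc_consecutive _ (Nat.zero_le m0) (le_max_left _ _)
  have hA : ∑ j ∈ Finset.Ioc 0 m0, (1 + a*(j:ℝ)^2)⁻¹ ≤ (m0:ℝ) := by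
    have := Finset.sum_le_card_nsmul (Finset.Ioc 0 m0) (fun j => (1 + a*(j:ℝ)^2)⁻¹) 1
      (fun x _ => inv_le_one_of_one_le₀ (by nlinarith [sq_nonneg ((x:ℝ))]))
    simpa [Nat.card_Ioc] using this
  have hB : ∑ j ∈ Finset.Ioc m0 K, (1 + a*(j:ℝ)^2)⁻¹ ≤ a⁻¹ * (m0:ℝ)⁻¹ := by
    have hterm : ∀ j ∈ Finset.Ioc m0 K, (1 + a*(j:ℝ)^2)⁻¹ ≤ a⁻¹ * ((j:ℝ)^2)⁻¹ := by
      intro j hj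
      have hj1 : 1 ≤ j := le_trans hm01 (Finset.mem_Ioc.mp hj).1.le
      have hjpos : (0:ℝ) < (j:ℝ) := by exact_mod_cast hj1
      rw [← mul_inv]
      exact inv_anti₀ (by positivity) (by nlinarith)
    calc ∑ j ∈ Finset.Ioc m0 K, (1 + a*(j:ℝ)^2)⁻¹ ≤ ∑ j ∈ Finset.Ioc m0 K, a⁻¹ * ((j:ℝ)^2)⁻¹ :=
          Finset.sum_le_sum hterm
      _ = a⁻¹ * ∑ j ∈ Finset.Ioc m0 K, ((j:ℝ)^2)⁻¹ := by rw [Finset.mul_sum]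
      _ ≤ a⁻¹ * ((m0:ℝ)⁻¹ - (K:ℝ)⁻¹) := by
          refine mul_le_mul_of_nonneg_left ?_ (by positivity)
          exact sum_Ioc_inv_sq_le_sub (by omega) (le_max_left _ _)
      _ ≤ a⁻¹ * (m0:ℝ)⁻¹ := by
          refine mul_le_mul_of_nonneg_left ?_ (by positivity)
          have : (0:ℝ) ≤ (K:ℝ)⁻¹ := by positivity
          linarith
  have hm0inv : (m0:ℝ)⁻¹ ≤ s⁻¹ := inv_anti₀ hs0 hm0s
  have hfin : a⁻¹ * (m0:ℝ)⁻¹ ≤ s := by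
    have h1 : a⁻¹ * (m0:ℝ)⁻¹ ≤ a⁻¹ * s⁻¹ := mul_le_mul_of_nonneg_left hm0inv (by positivity)
    have h2 : a⁻¹ * s⁻¹ = s := by
      rw [hsdef, inv_inv]
      rw [← Real.mul_self_sqrt ha.le]
      field_simp
      rw [Real.sqrt_sq (Real.sqrt_nonneg a)]
    linarith
  linarith

lemma sum_exp_le (dbar t : ℝ) (ht : 0 < t) (hN : 2*|dbar| ≤ (N:ℝ)) :
    ∑ k : ZMod N, Real.exp (t * (((N:ℝ)^2 + dbar*(N:ℝ)) * (Real.cos (2*Real.pi*((k:ZMod N).val:ℝ)/N) - 1)))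
      ≤ 3 + 2/Real.sqrt t := by
  have hN0 : N ≠ 0 := NeZero.ne N
  have hNpos : (0:ℝ) < N := by exact_mod_cast Nat.pos_of_ne_zero hN0
  set c := t * ((N:ℝ)^2 + dbar*(N:ℝ)) with hcdef
  have hcoef : (N:ℝ)^2/2 ≤ (N:ℝ)^2 + dbar*(N:ℝ) := by
    have h1 : -|dbar| ≤ dbar := neg_abs_le dbar
    nlinarith [abs_nonneg dbar]
  have hc : t * (N:ℝ)^2/2 ≤ c := by
    rw [hcdef]
    have := mul_le_mul_of_nonneg_left hcoef ht.le
    linarith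
  have hexp : ∀ k : ZMod N,
      t * (((N:ℝ)^2 + dbar*(N:ℝ)) * (Real.cos (2*Real.pi*((k:ZMod N).val:ℝ)/N) - 1))
        = c * (Real.cos (2*Real.pi*((k:ZMod N).val:ℝ)/N) - 1) := by
    intro k; rw [hcdef]; ring
  -- reindex sum over ZMod N as sum over range N
  have hreindex : ∑ k : ZMod N, Real.exp (c * (Real.cos (2*Real.pi*((k:ZMod N).val:ℝ)/N) - 1))
      = ∑ j ∈ Finset.range N, Real.exp (c * (Real.cos (2*Real.pi*(j:ℝ)/N) - 1)) := by
    refine Finset.sum_nbij' (fun k => k.val) (fun j => (j : ZMod N)) ?_ ?_ ?_ ?_ ?_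
    · intro k _; exact Finset.mem_range.mpr (ZMod.val_lt k)
    · intro j _; exact Finset.mem_univ _
    · intro k _; exact ZMod.natCast_rightInverse k
    · intro j hj; exact ZMod.val_cast_of_lt (Finset.mem_range.mp hj)
    · intro k _; rfl
  rw [Finset.sum_congr rfl (fun k _ => by rw [hexp k]), hreindex]
  set g : ℕ → ℝ := fun j => (1 + 4*t*(j:ℝ)^2)⁻¹ with hgdef
  have hstep : ∑ j ∈ Finset.range N, Real.exp (c * (Real.cos (2*Real.pi*(j:ℝ)/N) - 1))
      ≤ ∑ j ∈ Finset.range N, g j + ∑ j ∈ Finset.range N, g (N - j) := by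
    rw [← Finset.sum_add_distrib]
    exact Finset.sum_le_sum fun j hj =>
      bound_j N j hN0 (Finset.mem_range.mp hj) t c ht.le hc
  have hg0 : ∀ j, 0 ≤ g j := fun j => by rw [hgdef]; positivity
  have h1 : ∑ j ∈ Finset.range N, g j ≤ 1 + ∑ j ∈ Finset.Ioc 0 N, g j := by
    have hsub : Finset.range N ⊆ insert 0 (Finset.Ioc 0 N) := by
      intro j hj
      rcases Nat.eq_zero_or_pos j with h | h
      · simp [h]
      · simp only [Finset.mem_insert, Finset.mem_Ioc]
        right
        exact ⟨h, (Finset.mem_range.mp hj).le⟩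
    calc ∑ j ∈ Finset.range N, g j ≤ ∑ j ∈ insert 0 (Finset.Ioc 0 N), g j :=
          Finset.sum_le_sum_of_subset_of_nonneg hsub (fun i _ _ => hg0 i)
      _ = g 0 + ∑ j ∈ Finset.Ioc 0 N, g j := Finset.sum_insert (by simp)
      _ = 1 + ∑ j ∈ Finset.Ioc 0 N, g j := by rw [hgdef]; norm_num
  have h2 : ∑ j ∈ Finset.range N, g (N - j) = ∑ j ∈ Finset.Ioc 0 N, g j := by
    refine Finset.sum_nbij' (fun j => N - j) (fun j => N - j) ?_ ?_ ?_ ?_ ?_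
    · intro j hj
      have h := Finset.mem_range.mp hj
      simp only [Finset.mem_Ioc]
      omega
    · intro j hj
      have h := Finset.mem_Ioc.mp hj
      simp only [Finset.mem_range]
      omega
    · intro j hj
      have h := Finset.mem_range.mp hj
      show N - (N - j) = j
      omega
    · intro j hj
      have h := Finset.mem_Ioc.mp hj
      show N - (N - j) = j
      omega
    · intro j _; rfl
  have h4t : (0:ℝ) < 4*t := by linarith
  have htail : ∑ j ∈ Finset.Ioc 0 N, g j ≤ 2*(Real.sqrt (4*t))⁻¹ + 1 := by
    rw [hgdef]
    exact sum_inv_quad_le (4*t) h4t N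
  have hsqrt4t : Real.sqrt (4*t) = 2 * Real.sqrt t := by
    rw [show (4:ℝ)*t = 2^2 * t by ring, Real.sqrt_mul (by positivity), Real.sqrt_sq (by norm_num)]
  have hsq : 0 < Real.sqrt t := Real.sqrt_pos.mpr ht
  have hval : 2*(Real.sqrt (4*t))⁻¹ + 1 = 1/Real.sqrt t + 1 := by
    rw [hsqrt4t]
    field_simp
  calc ∑ j ∈ Finset.range N, Real.exp (c * (Real.cos (2*Real.pi*(j:ℝ)/N) - 1))
      ≤ ∑ j ∈ Finset.range N, g j + ∑ j ∈ Finset.range N, g (N - j) := hstep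
    _ = ∑ j ∈ Finset.range N, g j + ∑ j ∈ Finset.Ioc 0 N, g j := by rw [h2]
    _ ≤ (1 + ∑ j ∈ Finset.Ioc 0 N, g j) + ∑ j ∈ Finset.Ioc 0 N, g j := by linarith
    _ ≤ 1 + 2 * (1/Real.sqrt t + 1) := by
        have := htail.trans_eq hval
        linarith
    _ = 3 + 2/Real.sqrt t := by field_simp; ring

lemma H_le_one (dbar t : ℝ) (ht : 0 ≤ t) (hN : 2*|dbar| ≤ (N:ℝ)) (x y : ZMod N) :
    NormedSpace.exp (t • genMat N dbar) x y ≤ 1 := by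
  have hN0 : N ≠ 0 := NeZero.ne N
  have hNpos : (0:ℝ) < N := by exact_mod_cast Nat.pos_of_ne_zero hN0
  have hcoef : (0:ℝ) ≤ (N:ℝ)^2 + dbar*(N:ℝ) := by
    have h1 : -|dbar| ≤ dbar := neg_abs_le dbar
    nlinarith [abs_nonneg dbar]
  refine (entry_le dbar t x y).trans ?_
  have hterm : ∀ k : ZMod N,
      Real.exp (t * (((N:ℝ)^2 + dbar*(N:ℝ)) * (Real.cos (2*Real.pi*((k:ZMod N).val:ℝ)/N) - 1))) ≤ 1 := by
    intro k
    rw [Real.exp_le_one_iff]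
    have hcos := Real.cos_le_one (2*Real.pi*((k:ZMod N).val:ℝ)/N)
    have : ((N:ℝ)^2 + dbar*(N:ℝ)) * (Real.cos (2*Real.pi*((k:ZMod N).val:ℝ)/N) - 1) ≤ 0 :=
      mul_nonpos_of_nonneg_of_nonpos hcoef (by linarith)
    exact mul_nonpos_of_nonneg_of_nonpos ht this
  have hsum : ∑ k : ZMod N,
      Real.exp (t * (((N:ℝ)^2 + dbar*(N:ℝ)) * (Real.cos (2*Real.pi*((k:ZMod N).val:ℝ)/N) - 1))) ≤ (N:ℝ) := by
    have := Finset.sum_le_card_nsmul Finset.univ _ 1 (fun k _ => hterm k)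
    simpa [ZMod.card] using this
  calc (N:ℝ)⁻¹ * ∑ k : ZMod N,
        Real.exp (t * (((N:ℝ)^2 + dbar*(N:ℝ)) * (Real.cos (2*Real.pi*((k:ZMod N).val:ℝ)/N) - 1)))
      ≤ (N:ℝ)⁻¹ * (N:ℝ) := mul_le_mul_of_nonneg_left hsum (by positivity)
    _ = 1 := inv_mul_cancel₀ hNpos.ne'

lemma H_le_sqrt (dbar t : ℝ) (ht : 0 < t) (hN : 2*|dbar| ≤ (N:ℝ)) (x y : ZMod N) :
    NormedSpace.exp (t • genMat N dbar) x y ≤ (3 + 2/Real.sqrt t) / N := by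
  have hN0 : N ≠ 0 := NeZero.ne N
  have hNpos : (0:ℝ) < N := by exact_mod_cast Nat.pos_of_ne_zero hN0
  refine (entry_le dbar t x y).trans ?_
  rw [div_eq_inv_mul]
  exact mul_le_mul_of_nonneg_left (sum_exp_le dbar t ht hN) (by positivity)

end HeatAux

/-- there is `C = C(d̄)` such that for every `N ≥ 2|d̄|`, all `0 ≤ S ≤ T ≤ 1`,
all `x, y ∈ 𝕋_N` and every `ν ∈ [0,1]`: `N^ν (T−S)^{ν/2} H^N_{S,T,x,y} ≤ C`. -/
theorem stmt_1 (dbar : ℝ) :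
    ∃ C : ℝ, ∀ (N : ℕ) [NeZero N], 2 * |dbar| ≤ (N : ℝ) →
      ∀ S T : ℝ, 0 ≤ S → S ≤ T → T ≤ 1 →
        ∀ x y : ZMod N, ∀ ν : ℝ, ν ∈ Set.Icc (0:ℝ) 1 →
          (N : ℝ) ^ ν * (T - S) ^ (ν / 2) * heatKer N dbar S T x y ≤ C := by
  refine ⟨5, fun N _ hN S T hS hST hT1 x y ν hν => ?_⟩
  obtain ⟨hν0, hν1⟩ := hν
  set t := T - S with htdef
  have ht0 : 0 ≤ t := sub_nonneg.mpr hST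
  have ht1 : t ≤ 1 := by rw [htdef]; linarith
  have hNpos : (0:ℝ) < N := by exact_mod_cast Nat.pos_of_ne_zero (NeZero.ne N)
  have hHeq : heatKer N dbar S T x y = NormedSpace.exp (t • genMat N dbar) x y := rfl
  set H := heatKer N dbar S T x y with hHdef
  have hpre : (N:ℝ)^ν * t^(ν/2) = ((N:ℝ) * Real.sqrt t)^ν := by
    rw [Real.mul_rpow hNpos.le (Real.sqrt_nonneg t)]
    congr 1
    rw [show ν/2 = (1/2)*ν by ring, Real.rpow_mul ht0, ← Real.sqrt_eq_rpow]
  have hprenn : 0 ≤ (N:ℝ)^ν * t^(ν/2) := by positivity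
  rcases le_or_gt H 0 with hHneg | hHpos
  · have h0 : (N:ℝ)^ν * t^(ν/2) * H ≤ 0 := mul_nonpos_of_nonneg_of_nonpos hprenn hHneg
    linarith
  set u := (N:ℝ) * Real.sqrt t with hudef
  have hu0 : 0 ≤ u := by positivity
  rcases le_or_gt u 1 with hu | hu
  · have h1 : (N:ℝ)^ν * t^(ν/2) ≤ 1 := by
      rw [hpre]
      exact Real.rpow_le_one hu0 hu hν0
    have h2 : H ≤ 1 := by
      rw [hHeq]
      exact HeatAux.H_le_one dbar t ht0 hN x y
    nlinarith
  · have htpos : 0 < t := by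
      rcases lt_or_eq_of_le ht0 with h | h
      · exact h
      · exfalso
        rw [hudef, ← h, Real.sqrt_zero, mul_zero] at hu
        linarith
    have hsq : 0 < Real.sqrt t := Real.sqrt_pos.mpr htpos
    have hupow : u^ν ≤ u := by
      calc u^ν ≤ u^(1:ℝ) := Real.rpow_le_rpow_of_exponent_le hu.le hν1
        _ = u := Real.rpow_one u
    have hHle : H ≤ (3 + 2/Real.sqrt t)/N := by
      rw [hHeq]
      exact HeatAux.H_le_sqrt dbar t htpos hN x y
    have hsqle1 : Real.sqrt t ≤ 1 := by
      rw [show (1:ℝ) = Real.sqrt 1 by rw [Real.sqrt_one]]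
      exact Real.sqrt_le_sqrt ht1
    calc (N:ℝ)^ν * t^(ν/2) * H = u^ν * H := by rw [hpre]
      _ ≤ u * H := mul_le_mul_of_nonneg_right hupow hHpos.le
      _ ≤ u * ((3 + 2/Real.sqrt t)/N) := mul_le_mul_of_nonneg_left hHle hu0
      _ = Real.sqrt t * (3 + 2/Real.sqrt t) := by
          rw [hudef]
          field_simp
      _ = 3 * Real.sqrt t + 2 := by field_simp
      _ ≤ 5 := by nlinarith
end

section
/- There exists a constant C depending only on d̄ such that for every integer N ≥ 2|d̄|, all 0 ≤ S ≤ T ≤ 1, all x, y ∈ 𝕋_N, every nonzero ℓ ∈ ℤ, and every real ν ∈ [0,1], the spatial gradient in the backward variable x satisfies N^{2ν} · (T−S)^{ν} · |ℓ|^{−ν} · |H^N_{S,T,x+ℓ,y} − H^N_{S,T,x,y}| ≤ C. -/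
open MeasureTheory

namespace Stmt2

open Complex Finset Matrix
open scoped Real

variable {N : ℕ} [NeZero N]

/-- Complexification of the generator. -/
noncomputable def Lc (N : ℕ) (dbar : ℝ) : Matrix (ZMod N) (ZMod N) ℂ :=
  (genMat N dbar).map Complex.ofReal

/-- The eigenvalue of the generator attached to the `k`-th character. -/
noncomputable def lam (N : ℕ) [NeZero N] (dbar : ℝ) (k : ZMod N) : ℂ :=
  ((N : ℂ) ^ 2 / 2) * (ZMod.stdAddChar k + ZMod.stdAddChar (-k))
    + (dbar : ℂ) * (N : ℂ) * ZMod.stdAddChar (-k)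
    - ((N : ℂ) ^ 2 + (dbar : ℂ) * (N : ℂ))

/-- The (inverse) DFT matrix. -/
noncomputable def Pm (N : ℕ) [NeZero N] : Matrix (ZMod N) (ZMod N) ℂ :=
  Matrix.of fun x k => ZMod.stdAddChar (k * x)

/-- The DFT matrix (inverse of `Pm`). -/
noncomputable def Qm (N : ℕ) [NeZero N] : Matrix (ZMod N) (ZMod N) ℂ :=
  Matrix.of fun k y => (N : ℂ)⁻¹ * ZMod.stdAddChar (-(k * y))

lemma sum_char (t : ZMod N) :
    ∑ j : ZMod N, ZMod.stdAddChar (t * j) = if t = 0 then (N : ℂ) else 0 := by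
  split_ifs with h
  · simp only [h, zero_mul, AddChar.map_zero_eq_one, sum_const, card_univ, ZMod.card,
      nsmul_eq_mul, mul_one]
  · exact AddChar.sum_eq_zero_of_ne_one (ZMod.isPrimitive_stdAddChar N h)

lemma Pm_mul_Qm : Pm N * Qm N = 1 := by
  have hN : (N : ℂ) ≠ 0 := Nat.cast_ne_zero.2 (NeZero.ne N)
  ext x y
  rw [Matrix.mul_apply]
  have h : ∀ k : ZMod N,
      Pm N x k * Qm N k y = (N : ℂ)⁻¹ * ZMod.stdAddChar ((x - y) * k) := by
    intro k
    show ZMod.stdAddChar (k * x) * ((N : ℂ)⁻¹ * ZMod.stdAddChar (-(k * y)))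
        = (N : ℂ)⁻¹ * ZMod.stdAddChar ((x - y) * k)
    calc ZMod.stdAddChar (k * x) * ((N : ℂ)⁻¹ * ZMod.stdAddChar (-(k * y)))
        = (N : ℂ)⁻¹ * (ZMod.stdAddChar (k * x) * ZMod.stdAddChar (-(k * y))) := by ring
      _ = (N : ℂ)⁻¹ * ZMod.stdAddChar (k * x + -(k * y)) := by
          rw [AddChar.map_add_eq_mul]
      _ = (N : ℂ)⁻¹ * ZMod.stdAddChar ((x - y) * k) := by
          rw [show k * x + -(k * y) = (x - y) * k by ring]
  rw [Finset.sum_congr rfl fun k _ => h k, ← Finset.mul_sum, sum_char]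
  by_cases hxy : x = y
  · simp [hxy, Matrix.one_apply, hN]
  · have : x - y ≠ 0 := sub_ne_zero.2 hxy
    simp [Matrix.one_apply, hxy, this]

lemma Qm_mul_Pm : Qm N * Pm N = 1 := by
  have hN : (N : ℂ) ≠ 0 := Nat.cast_ne_zero.2 (NeZero.ne N)
  ext k k'
  rw [Matrix.mul_apply]
  have h : ∀ x : ZMod N,
      Qm N k x * Pm N x k' = (N : ℂ)⁻¹ * ZMod.stdAddChar ((k' - k) * x) := by
    intro x
    show (N : ℂ)⁻¹ * ZMod.stdAddChar (-(k * x)) * ZMod.stdAddChar (k' * x)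
        = (N : ℂ)⁻¹ * ZMod.stdAddChar ((k' - k) * x)
    calc (N : ℂ)⁻¹ * ZMod.stdAddChar (-(k * x)) * ZMod.stdAddChar (k' * x)
        = (N : ℂ)⁻¹ * (ZMod.stdAddChar (-(k * x)) * ZMod.stdAddChar (k' * x)) := by ring
      _ = (N : ℂ)⁻¹ * ZMod.stdAddChar (-(k * x) + k' * x) := by
          rw [AddChar.map_add_eq_mul]
      _ = (N : ℂ)⁻¹ * ZMod.stdAddChar ((k' - k) * x) := by
          rw [show -(k * x) + k' * x = (k' - k) * x by ring]
  rw [Finset.sum_congr rfl fun x _ => h x, ← Finset.mul_sum, sum_char]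
  by_cases hkk : k = k'
  · simp [hkk, Matrix.one_apply, hN]
  · have : k' - k ≠ 0 := sub_ne_zero.2 (Ne.symm hkk)
    simp [Matrix.one_apply, hkk, this]

lemma Lc_apply (dbar : ℝ) (x y : ZMod N) :
    Lc N dbar x y =
      ((N : ℂ) ^ 2 / 2) * ((if y = x + 1 then 1 else 0) + (if y = x - 1 then 1 else 0))
        + (dbar : ℂ) * (N : ℂ) * (if y = x - 1 then 1 else 0)
        - ((N : ℂ) ^ 2 + (dbar : ℂ) * (N : ℂ)) * (if y = x then 1 else 0) := by
  simp only [Lc, genMat, Matrix.map_apply, Matrix.of_apply]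
  push_cast [apply_ite Complex.ofReal]
  ring

lemma Lc_mul_Pm (dbar : ℝ) :
    Lc N dbar * Pm N = Pm N * Matrix.diagonal (lam N dbar) := by
  ext x k
  rw [Matrix.mul_apply, Matrix.mul_diagonal]
  have h : ∀ y : ZMod N, Lc N dbar x y * Pm N y k =
      (if y = x + 1 then ((N : ℂ) ^ 2 / 2) * ZMod.stdAddChar (k * y) else 0)
      + (if y = x - 1 then ((N : ℂ) ^ 2 / 2 + (dbar : ℂ) * (N : ℂ))
          * ZMod.stdAddChar (k * y) else 0)
      - (if y = x then ((N : ℂ) ^ 2 + (dbar : ℂ) * (N : ℂ))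
          * ZMod.stdAddChar (k * y) else 0) := by
    intro y
    rw [Lc_apply]
    show (_ : ℂ) * ZMod.stdAddChar (k * y) = _
    split_ifs <;> ring
  rw [Finset.sum_congr rfl fun y _ => h y]
  rw [Finset.sum_sub_distrib, Finset.sum_add_distrib, Finset.sum_ite_eq',
    Finset.sum_ite_eq', Finset.sum_ite_eq']
  simp only [Finset.mem_univ, if_true]
  have e1 : ZMod.stdAddChar (k * (x + 1)) = ZMod.stdAddChar (k * x) * ZMod.stdAddChar k := by
    rw [show k * (x + 1) = k * x + k by ring, AddChar.map_add_eq_mul]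
  have e2 : ZMod.stdAddChar (k * (x - 1)) = ZMod.stdAddChar (k * x) * ZMod.stdAddChar (-k) := by
    rw [show k * (x - 1) = k * x + -k by ring, AddChar.map_add_eq_mul]
  rw [e1, e2]
  show _ = ZMod.stdAddChar (k * x) * lam N dbar k
  rw [lam]
  ring

lemma Lc_eq (dbar : ℝ) :
    Lc N dbar = Pm N * Matrix.diagonal (lam N dbar) * Qm N := by
  calc Lc N dbar = Lc N dbar * (Pm N * Qm N) := by rw [Pm_mul_Qm, mul_one]
    _ = (Lc N dbar * Pm N) * Qm N := by rw [mul_assoc]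
    _ = _ := by rw [Lc_mul_Pm]

lemma exp_eq (dbar : ℝ) (t : ℝ) :
    NormedSpace.exp (t • Lc N dbar)
      = Pm N * Matrix.diagonal (fun k => Complex.exp ((t : ℂ) * lam N dbar k)) * Qm N := by
  set U : (Matrix (ZMod N) (ZMod N) ℂ)ˣ := ⟨Pm N, Qm N, Pm_mul_Qm, Qm_mul_Pm⟩ with hU
  have hsm : t • Lc N dbar
      = (U : Matrix (ZMod N) (ZMod N) ℂ)
        * Matrix.diagonal (fun k => (t : ℂ) * lam N dbar k)
        * ((U⁻¹ : (Matrix (ZMod N) (ZMod N) ℂ)ˣ) : Matrix (ZMod N) (ZMod N) ℂ) := by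
    show t • Lc N dbar = Pm N * Matrix.diagonal (fun k => (t : ℂ) * lam N dbar k) * Qm N
    rw [Lc_eq (N := N) dbar]
    have hdiag : t • Matrix.diagonal (lam N dbar)
        = Matrix.diagonal (fun k => (t : ℂ) * lam N dbar k) := by
      ext i j
      by_cases h : i = j <;>
        simp [Matrix.diagonal_apply, h, Matrix.smul_apply, Complex.real_smul]
    rw [← hdiag, Matrix.mul_smul, Matrix.smul_mul]
  rw [hsm, Matrix.exp_units_conj U, Matrix.exp_diagonal]
  have : NormedSpace.exp (fun k => (t : ℂ) * lam N dbar k)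
      = fun k => Complex.exp ((t : ℂ) * lam N dbar k) := by
    funext k
    rw [Pi.coe_exp, Complex.exp_eq_exp_ℂ]
  rw [this]
  rfl

lemma exp_entry (dbar : ℝ) (t : ℝ) (x y : ZMod N) :
    NormedSpace.exp (t • Lc N dbar) x y
      = ∑ k : ZMod N, ZMod.stdAddChar (k * x) *
          (Complex.exp ((t : ℂ) * lam N dbar k)
            * ((N : ℂ)⁻¹ * ZMod.stdAddChar (-(k * y)))) := by
  rw [exp_eq, Matrix.mul_assoc, Matrix.mul_apply]
  refine Finset.sum_congr rfl fun k _ => ?_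
  rw [Matrix.diagonal_mul]
  rfl

lemma heatKer_eq (dbar : ℝ) (S T : ℝ) (x y : ZMod N) :
    (heatKer N dbar S T x y : ℂ) = NormedSpace.exp ((T - S) • Lc N dbar) x y := by
  letI : SeminormedRing (Matrix (ZMod N) (ZMod N) ℝ) := Matrix.linftyOpSemiNormedRing
  letI : NormedRing (Matrix (ZMod N) (ZMod N) ℝ) := Matrix.linftyOpNormedRing
  letI : NormedAlgebra ℝ (Matrix (ZMod N) (ZMod N) ℝ) := Matrix.linftyOpNormedAlgebra
  letI : SeminormedRing (Matrix (ZMod N) (ZMod N) ℂ) := Matrix.linftyOpSemiNormedRing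
  letI : NormedRing (Matrix (ZMod N) (ZMod N) ℂ) := Matrix.linftyOpNormedRing
  letI : NormedAlgebra ℝ (Matrix (ZMod N) (ZMod N) ℂ) := Matrix.linftyOpNormedAlgebra
  letI : NormedAlgebra ℚ (Matrix (ZMod N) (ZMod N) ℝ) := Matrix.linftyOpNormedAlgebra
  letI : NormedAlgebra ℚ (Matrix (ZMod N) (ZMod N) ℂ) := Matrix.linftyOpNormedAlgebra
  have hcont : Continuous (Complex.ofRealHom.mapMatrix :
      Matrix (ZMod N) (ZMod N) ℝ →+* Matrix (ZMod N) (ZMod N) ℂ) := by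
    have hco : ⇑(Complex.ofRealHom.mapMatrix :
        Matrix (ZMod N) (ZMod N) ℝ →+* Matrix (ZMod N) (ZMod N) ℂ)
        = fun M : Matrix (ZMod N) (ZMod N) ℝ => M.map Complex.ofReal := rfl
    rw [hco]
    exact Continuous.matrix_map continuous_id Complex.continuous_ofReal
  have h := NormedSpace.map_exp
    (Complex.ofRealHom.mapMatrix : Matrix (ZMod N) (ZMod N) ℝ →+* Matrix (ZMod N) (ZMod N) ℂ)
    hcont ((T - S) • genMat N dbar)
  have hmap : (Complex.ofRealHom.mapMatrix :
        Matrix (ZMod N) (ZMod N) ℝ →+* Matrix (ZMod N) (ZMod N) ℂ) ((T - S) • genMat N dbar)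
      = (T - S) • Lc N dbar := by
    ext i j
    simp [RingHom.mapMatrix_apply, Matrix.map_apply, Matrix.smul_apply, Lc,
      Complex.real_smul]
  rw [hmap] at h
  have h2 := congrFun (congrFun h x) y
  simp only [RingHom.mapMatrix_apply, Matrix.map_apply, Complex.ofRealHom_eq_coe] at h2
  exact h2

lemma heatKer_eq' (dbar : ℝ) (S T : ℝ) (x y : ZMod N) :
    (heatKer N dbar S T x y : ℂ) = NormedSpace.exp ((T - S) • Lc N dbar) x y :=
  heatKer_eq dbar S T x y

/-- The real part of the eigenvalue, and its Gaussian-type bound. -/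
lemma re_lam_le (dbar : ℝ) (hd : 2 * |dbar| ≤ (N : ℝ)) (k : ZMod N) :
    (lam N dbar k).re ≤ -(4 * ((k.valMinAbs : ℝ)) ^ 2) := by
  have hNpos : (0 : ℝ) < N := Nat.cast_pos.2 (Nat.pos_of_ne_zero (NeZero.ne N))
  set m : ℤ := k.valMinAbs with hm
  set θ : ℝ := 2 * π * (m : ℝ) / N with hθdef
  have hψ : ZMod.stdAddChar k = Complex.exp ((θ : ℝ) * I) := by
    rw [← ZMod.coe_valMinAbs k, ZMod.stdAddChar_coe]
    congr 1
    push_cast [hθdef]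
    ring
  have hψ' : ZMod.stdAddChar (-k) = Complex.exp ((-θ : ℝ) * I) := by
    have : (-k) = (((-m : ℤ)) : ZMod N) := by push_cast [hm, ZMod.coe_valMinAbs]; ring
    rw [this, ZMod.stdAddChar_coe]
    congr 1
    push_cast [hθdef]
    ring
  have hre : (lam N dbar k).re = ((N : ℝ) ^ 2 + dbar * N) * (Real.cos θ - 1) := by
    have hlam : lam N dbar k
        = (((N : ℝ) ^ 2 / 2 : ℝ) : ℂ) * (Complex.exp ((θ : ℝ) * I) + Complex.exp ((-θ : ℝ) * I))
          + ((dbar * N : ℝ) : ℂ) * Complex.exp ((-θ : ℝ) * I)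
          - (((N : ℝ) ^ 2 + dbar * N : ℝ) : ℂ) := by
      rw [lam, hψ, hψ']
      push_cast
      ring
    rw [hlam]
    simp only [Complex.sub_re, Complex.add_re, Complex.re_ofReal_mul, Complex.ofReal_re,
      Complex.exp_ofReal_mul_I_re, Real.cos_neg]
    ring
  have habs : |θ| ≤ π := by
    have h1 : (m.natAbs : ℝ) ≤ (N : ℝ) / 2 := by
      have := ZMod.natAbs_valMinAbs_le k
      have h2 : ((m.natAbs : ℕ) : ℝ) ≤ ((N / 2 : ℕ) : ℝ) := Nat.cast_le.2 this
      calc ((m.natAbs : ℕ) : ℝ) ≤ ((N / 2 : ℕ) : ℝ) := h2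
        _ ≤ (N : ℝ) / 2 := by
            rw [le_div_iff₀ (by norm_num : (0:ℝ) < 2)]
            exact_mod_cast Nat.div_mul_le_self N 2
    have hmabs : |(m : ℝ)| ≤ (N : ℝ) / 2 := by
      rw [← Int.cast_abs]
      rwa [show |m| = (m.natAbs : ℤ) from (Int.abs_eq_natAbs m), Int.cast_natCast]
    have : |θ| = 2 * π * |(m : ℝ)| / N := by
      rw [hθdef, abs_div, abs_mul, abs_mul]
      rw [abs_of_pos Real.pi_pos, abs_of_pos hNpos, abs_of_pos (by norm_num : (0:ℝ) < 2)]
    rw [this]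
    rw [div_le_iff₀ hNpos]
    nlinarith [Real.pi_pos, hmabs]
  have hcos : Real.cos θ ≤ 1 - 2 / π ^ 2 * θ ^ 2 := Real.cos_le_one_sub_mul_cos_sq habs
  have hc2 : (N : ℝ) ^ 2 / 2 ≤ (N : ℝ) ^ 2 + dbar * N := by
    nlinarith [abs_nonneg dbar, neg_abs_le dbar]
  have hθsq : θ ^ 2 = 4 * π ^ 2 * (m : ℝ) ^ 2 / (N : ℝ) ^ 2 := by
    rw [hθdef]; field_simp; ring
  have hcosle : Real.cos θ - 1 ≤ 0 := by
    nlinarith [Real.cos_le_one θ]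
  rw [hre]
  calc ((N : ℝ) ^ 2 + dbar * N) * (Real.cos θ - 1)
      ≤ ((N : ℝ) ^ 2 / 2) * (Real.cos θ - 1) :=
        mul_le_mul_of_nonpos_right hc2 hcosle
    _ ≤ ((N : ℝ) ^ 2 / 2) * (-(2 / π ^ 2 * θ ^ 2)) := by
        have h2 : Real.cos θ - 1 ≤ -(2 / π ^ 2 * θ ^ 2) := by linarith
        exact mul_le_mul_of_nonneg_left h2 (by positivity)
    _ = -(4 * ((m : ℝ)) ^ 2) := by
        rw [hθsq]
        have hπ : π ≠ 0 := Real.pi_ne_zero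
        have hN : (N : ℝ) ≠ 0 := ne_of_gt hNpos
        field_simp

lemma abs_exp_I_sub_one (a : ℝ) : ‖Complex.exp ((a : ℝ) * I) - 1‖ ≤ |a| := by
  have h : (Complex.exp ((a : ℝ) * I) - 1)
      = ((Real.cos a - 1 : ℝ) : ℂ) + ((Real.sin a : ℝ) : ℂ) * I := by
    rw [Complex.exp_mul_I, ← Complex.ofReal_cos, ← Complex.ofReal_sin]
    push_cast
    ring
  rw [h, Complex.norm_add_mul_I]
  have h1 : (Real.cos a - 1) ^ 2 + Real.sin a ^ 2 ≤ a ^ 2 := by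
    nlinarith [Real.sin_sq_add_cos_sq a, Real.one_sub_sq_div_two_le_cos (x := a)]
  calc Real.sqrt ((Real.cos a - 1) ^ 2 + Real.sin a ^ 2)
      ≤ Real.sqrt (a ^ 2) := Real.sqrt_le_sqrt h1
    _ = |a| := Real.sqrt_sq_eq_abs a

lemma char_bound (k : ZMod N) (l : ℤ) :
    ‖ZMod.stdAddChar (k * (l : ZMod N)) - 1‖
      ≤ 2 * π * |(k.valMinAbs : ℝ)| * |(l : ℝ)| / N := by
  have hNpos : (0 : ℝ) < N := Nat.cast_pos.2 (Nat.pos_of_ne_zero (NeZero.ne N))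
  set m : ℤ := k.valMinAbs with hm
  have hkl : k * (l : ZMod N) = ((m * l : ℤ) : ZMod N) := by
    push_cast [hm, ZMod.coe_valMinAbs]
    ring
  set a : ℝ := 2 * π * ((m : ℝ) * (l : ℝ)) / N with ha
  have harg : ZMod.stdAddChar (k * (l : ZMod N)) = Complex.exp ((a : ℝ) * I) := by
    rw [hkl, ZMod.stdAddChar_coe]
    congr 1
    push_cast [ha]
    ring
  rw [harg]
  calc ‖Complex.exp ((a : ℝ) * I) - 1‖ ≤ |a| := abs_exp_I_sub_one a
    _ = 2 * π * |(m : ℝ)| * |(l : ℝ)| / N := by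
        rw [ha, abs_div, abs_mul, abs_mul, abs_mul]
        rw [abs_of_pos Real.pi_pos, abs_of_pos hNpos, abs_of_pos (by norm_num : (0:ℝ) < 2)]
        ring

lemma abs_char (j : ZMod N) : ‖ZMod.stdAddChar j‖ = 1 := by
  rw [ZMod.stdAddChar_apply]
  exact Circle.norm_coe _

/-- Master estimate: the heat-kernel gradient is bounded by a character sum. -/
lemma diff_le_sum (dbar : ℝ) (S T : ℝ) (x y : ZMod N) (l : ℤ) :
    |heatKer N dbar S T (x + (l : ZMod N)) y - heatKer N dbar S T x y|
      ≤ ∑ k : ZMod N, (N : ℝ)⁻¹ * ‖ZMod.stdAddChar (k * (l : ZMod N)) - 1‖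
          * Real.exp ((T - S) * (lam N dbar k).re) := by
  set t := T - S
  have h0 : |heatKer N dbar S T (x + (l : ZMod N)) y - heatKer N dbar S T x y|
      = ‖(heatKer N dbar S T (x + (l : ZMod N)) y : ℂ)
          - (heatKer N dbar S T x y : ℂ)‖ := by
    rw [← Complex.ofReal_sub, Complex.norm_real, Real.norm_eq_abs]
  rw [h0, heatKer_eq, heatKer_eq, exp_entry, exp_entry, ← Finset.sum_sub_distrib]
  refine le_trans (norm_sum_le _ _) (Finset.sum_le_sum fun k _ => ?_)
  have hterm : ZMod.stdAddChar (k * (x + (l : ZMod N))) *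
        (Complex.exp ((t : ℂ) * lam N dbar k) * ((N : ℂ)⁻¹ * ZMod.stdAddChar (-(k * y))))
      - ZMod.stdAddChar (k * x) *
        (Complex.exp ((t : ℂ) * lam N dbar k) * ((N : ℂ)⁻¹ * ZMod.stdAddChar (-(k * y))))
      = (ZMod.stdAddChar (k * (l : ZMod N)) - 1) * ZMod.stdAddChar (k * x) *
        (Complex.exp ((t : ℂ) * lam N dbar k) * ((N : ℂ)⁻¹ * ZMod.stdAddChar (-(k * y)))) := by
    have : ZMod.stdAddChar (k * (x + (l : ZMod N)))
        = ZMod.stdAddChar (k * x) * ZMod.stdAddChar (k * (l : ZMod N)) := by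
      rw [show k * (x + (l : ZMod N)) = k * x + k * (l : ZMod N) by ring,
        AddChar.map_add_eq_mul]
    rw [this]
    ring
  rw [hterm]
  have habs : ‖(ZMod.stdAddChar (k * (l : ZMod N)) - 1) * ZMod.stdAddChar (k * x) *
      (Complex.exp ((t : ℂ) * lam N dbar k) * ((N : ℂ)⁻¹ * ZMod.stdAddChar (-(k * y))))‖
      = ‖ZMod.stdAddChar (k * (l : ZMod N)) - 1‖ * 1 *
        (Real.exp (t * (lam N dbar k).re) * ((N : ℝ)⁻¹ * 1)) := by
    rw [norm_mul, norm_mul, norm_mul, norm_mul,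
      abs_char, abs_char, norm_inv, Complex.norm_natCast]
    congr 2
    rw [Complex.norm_exp]
    congr 1
    simp [Complex.re_ofReal_mul]
  rw [habs]
  exact le_of_eq (by ring)

/-- Summing over fibers of `natAbs ∘ valMinAbs`. -/
lemma sum_fiber_le (g : ℕ → ℝ) (hg : ∀ m, 0 ≤ g m) :
    ∑ k : ZMod N, g (k.valMinAbs.natAbs) ≤ 2 * ∑ m ∈ Finset.range (N / 2 + 1), g m := by
  have hmaps : ∀ k : ZMod N, k ∈ Finset.univ →
      k.valMinAbs.natAbs ∈ Finset.range (N / 2 + 1) := fun k _ =>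
    Finset.mem_range.2 (Nat.lt_succ_of_le (ZMod.natAbs_valMinAbs_le k))
  rw [← Finset.sum_fiberwise_of_maps_to hmaps (fun k => g k.valMinAbs.natAbs)]
  rw [Finset.mul_sum]
  refine Finset.sum_le_sum fun m _ => ?_
  have hcongr : ∑ k ∈ Finset.univ.filter (fun k : ZMod N => k.valMinAbs.natAbs = m),
      g k.valMinAbs.natAbs
      = ∑ k ∈ Finset.univ.filter (fun k : ZMod N => k.valMinAbs.natAbs = m), g m := by
    refine Finset.sum_congr rfl fun k hk => ?_
    rw [(Finset.mem_filter.1 hk).2]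
  rw [hcongr, Finset.sum_const, nsmul_eq_mul]
  have hcard : (Finset.univ.filter (fun k : ZMod N => k.valMinAbs.natAbs = m)).card ≤ 2 := by
    have : (Finset.univ.filter (fun k : ZMod N => k.valMinAbs.natAbs = m)).card
        ≤ ({(m : ℤ), -(m : ℤ)} : Finset ℤ).card := by
      refine Finset.card_le_card_of_injOn (fun k => k.valMinAbs) ?_ ?_
      · intro k hk
        have := (Finset.mem_filter.1 hk).2
        rcases Int.natAbs_eq_iff.1 this with h | h
        · simp [h]
        · simp [h]
      · intro a _ b _ hab
        exact ZMod.injective_valMinAbs hab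
    calc _ ≤ ({(m : ℤ), -(m : ℤ)} : Finset ℤ).card := this
      _ ≤ 2 := Finset.card_insert_le _ _ |>.trans (by simp)
  have := mul_le_mul_of_nonneg_right (show ((Finset.univ.filter
      (fun k : ZMod N => k.valMinAbs.natAbs = m)).card : ℝ) ≤ 2 by exact_mod_cast hcard)
    (hg m)
  linarith

/-- Telescoping Gaussian-sum estimate. -/
lemma sum_gauss_le' {a : ℝ} (hapos : 0 < a) (M : ℕ) :
    ∑ m ∈ Finset.range (M + 1), (m : ℝ) * Real.exp (-a * (m : ℝ) ^ 2) ≤ 1 / a := by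
  have key : ∑ m ∈ Finset.range (M + 1), a * ((m : ℝ) * Real.exp (-a * (m : ℝ) ^ 2)) ≤ 1 := by
    rw [Finset.sum_range_succ']
    have hzero : a * (((0 : ℕ) : ℝ) * Real.exp (-a * ((0 : ℕ) : ℝ) ^ 2)) = 0 := by norm_num
    rw [hzero, add_zero]
    have hterm : ∀ i : ℕ, a * (((i + 1 : ℕ) : ℝ) * Real.exp (-a * ((i + 1 : ℕ) : ℝ) ^ 2))
        ≤ Real.exp (-a * (i : ℝ) ^ 2) - Real.exp (-a * ((i + 1 : ℕ) : ℝ) ^ 2) := by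
      intro i
      push_cast
      have h0 : (0 : ℝ) ≤ (i : ℝ) := Nat.cast_nonneg i
      have hE := Real.exp_pos (-a * ((i : ℝ) + 1) ^ 2)
      calc a * (((i : ℝ) + 1) * Real.exp (-a * ((i : ℝ) + 1) ^ 2))
          ≤ Real.exp (-a * ((i : ℝ) + 1) ^ 2) * (a * (2 * (i : ℝ) + 1)) := by
            nlinarith [mul_nonneg (mul_nonneg hapos.le hE.le) h0]
        _ ≤ Real.exp (-a * ((i : ℝ) + 1) ^ 2) * (Real.exp (a * (2 * (i : ℝ) + 1)) - 1) := by
            have h2 := Real.add_one_le_exp (a * (2 * (i : ℝ) + 1))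
            apply mul_le_mul_of_nonneg_left _ hE.le
            linarith
        _ = Real.exp (-a * (i : ℝ) ^ 2) - Real.exp (-a * ((i : ℝ) + 1) ^ 2) := by
            rw [mul_sub, ← Real.exp_add, mul_one]
            congr 1
            ring
    calc ∑ i ∈ Finset.range M, a * (((i + 1 : ℕ) : ℝ) * Real.exp (-a * ((i + 1 : ℕ) : ℝ) ^ 2))
        ≤ ∑ i ∈ Finset.range M,
            (Real.exp (-a * (i : ℝ) ^ 2) - Real.exp (-a * ((i + 1 : ℕ) : ℝ) ^ 2)) :=
          Finset.sum_le_sum fun i _ => hterm i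
      _ = Real.exp (-a * ((0 : ℕ) : ℝ) ^ 2) - Real.exp (-a * ((M : ℕ) : ℝ) ^ 2) :=
          Finset.sum_range_sub' (fun i : ℕ => Real.exp (-a * (i : ℝ) ^ 2)) M
      _ ≤ 1 := by
          have h1 : Real.exp (-a * ((0 : ℕ) : ℝ) ^ 2) = 1 := by
            norm_num
          have h2 := Real.exp_pos (-a * ((M : ℕ) : ℝ) ^ 2)
          linarith
  have h6 : ∑ m ∈ Finset.range (M + 1), (m : ℝ) * Real.exp (-a * (m : ℝ) ^ 2)
      = a⁻¹ * ∑ m ∈ Finset.range (M + 1), a * ((m : ℝ) * Real.exp (-a * (m : ℝ) ^ 2)) := by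
    rw [Finset.mul_sum]
    refine Finset.sum_congr rfl fun m _ => ?_
    field_simp
  rw [h6, one_div]
  calc a⁻¹ * ∑ m ∈ Finset.range (M + 1), a * ((m : ℝ) * Real.exp (-a * (m : ℝ) ^ 2))
      ≤ a⁻¹ * 1 := mul_le_mul_of_nonneg_left key (by positivity)
    _ = a⁻¹ := mul_one _

lemma sum_gauss_le {t : ℝ} (ht : 0 < t) (M : ℕ) :
    ∑ m ∈ Finset.range (M + 1), (m : ℝ) * Real.exp (-(4 * t) * (m : ℝ) ^ 2)
      ≤ 1 / (4 * t) :=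
  sum_gauss_le' (by positivity) M

end Stmt2

open Stmt2 Complex Finset in
/-- spatial-gradient estimate for the heat kernel (gradient in the backward
variable `x`): `N^{2ν} (T−S)^{ν} |ℓ|^{−ν} |H^N_{S,T,x+ℓ,y} − H^N_{S,T,x,y}| ≤ C`. -/
theorem stmt_2 (dbar : ℝ) :
    ∃ C : ℝ, ∀ (N : ℕ) [NeZero N], 2 * |dbar| ≤ (N : ℝ) →
      ∀ S T : ℝ, 0 ≤ S → S ≤ T → T ≤ 1 →
        ∀ x y : ZMod N, ∀ ℓ : ℤ, ℓ ≠ 0 → ∀ ν : ℝ, ν ∈ Set.Icc (0:ℝ) 1 →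
          (N : ℝ) ^ (2 * ν) * (T - S) ^ ν * |(ℓ : ℝ)| ^ (-ν) *
              |heatKer N dbar S T (x + (ℓ : ZMod N)) y - heatKer N dbar S T x y| ≤ C := by
  refine ⟨2 + Real.pi, ?_⟩
  intro N _ hd S T hS hST hT1 x y ℓ hℓ ν hν
  obtain ⟨hν0, hν1⟩ := hν
  have hNpos : (0 : ℝ) < N := Nat.cast_pos.2 (Nat.pos_of_ne_zero (NeZero.ne N))
  set t : ℝ := T - S with htdef
  have ht0 : 0 ≤ t := sub_nonneg.2 hST
  have hlabs : (1 : ℝ) ≤ |(ℓ : ℝ)| := by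
    rw [← Int.cast_abs]
    exact_mod_cast Int.one_le_abs hℓ
  have hlpos : (0 : ℝ) < |(ℓ : ℝ)| := lt_of_lt_of_le one_pos hlabs
  set D : ℝ := |heatKer N dbar S T (x + (ℓ : ZMod N)) y - heatKer N dbar S T x y| with hD
  have hD0 : 0 ≤ D := abs_nonneg _
  -- Master sum bound
  have hmaster := diff_le_sum (N := N) dbar S T x y ℓ
  -- eigenvalue bounds
  have hre : ∀ k : ZMod N, (lam N dbar k).re ≤ -(4 * ((k.valMinAbs : ℝ)) ^ 2) :=
    fun k => re_lam_le dbar hd k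
  have hre0 : ∀ k : ZMod N, t * (lam N dbar k).re ≤ 0 := fun k => by
    have h1 := hre k
    have h2 : (lam N dbar k).re ≤ 0 := le_trans h1 (neg_nonpos.2 (by positivity))
    exact mul_nonpos_of_nonneg_of_nonpos ht0 h2
  -- Bound 1 : D ≤ 2
  have hbound1 : D ≤ 2 := by
    refine le_trans hmaster ?_
    have : ∀ k : ZMod N, (N : ℝ)⁻¹ * ‖ZMod.stdAddChar (k * (ℓ : ZMod N)) - 1‖
        * Real.exp (t * (lam N dbar k).re) ≤ (N : ℝ)⁻¹ * 2 := by
      intro k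
      have h1 : ‖ZMod.stdAddChar (k * (ℓ : ZMod N)) - 1‖ ≤ 2 := by
        calc ‖ZMod.stdAddChar (k * (ℓ : ZMod N)) - 1‖
            = ‖ZMod.stdAddChar (k * (ℓ : ZMod N)) - 1‖ := rfl
          _ ≤ ‖ZMod.stdAddChar (k * (ℓ : ZMod N))‖ + ‖(1 : ℂ)‖ := norm_sub_le _ _
          _ = 2 := by
              rw [show ‖ZMod.stdAddChar (k * (ℓ : ZMod N))‖
                  = ‖ZMod.stdAddChar (k * (ℓ : ZMod N))‖ from rfl, abs_char,
                norm_one]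
              norm_num
      have h2 : Real.exp (t * (lam N dbar k).re) ≤ 1 := Real.exp_le_one_iff.2 (hre0 k)
      calc (N : ℝ)⁻¹ * ‖ZMod.stdAddChar (k * (ℓ : ZMod N)) - 1‖
            * Real.exp (t * (lam N dbar k).re)
          ≤ (N : ℝ)⁻¹ * 2 * 1 := by
            apply mul_le_mul _ h2 (Real.exp_pos _).le (by positivity)
            exact mul_le_mul_of_nonneg_left h1 (by positivity)
        _ = (N : ℝ)⁻¹ * 2 := by ring
    calc (∑ k : ZMod N, (N : ℝ)⁻¹ * ‖ZMod.stdAddChar (k * (ℓ : ZMod N)) - 1‖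
          * Real.exp (t * (lam N dbar k).re))
        ≤ ∑ _k : ZMod N, (N : ℝ)⁻¹ * 2 := Finset.sum_le_sum fun k _ => this k
      _ = 2 := by
          rw [Finset.sum_const, Finset.card_univ, ZMod.card, nsmul_eq_mul]
          field_simp
  -- Bound 2 : a * D ≤ π where a = N² t / |ℓ|
  set a : ℝ := (N : ℝ) ^ 2 * t * |(ℓ : ℝ)|⁻¹ with hadef
  have ha0 : 0 ≤ a := by positivity
  have hbound2 : a * D ≤ Real.pi := by
    rcases eq_or_lt_of_le ht0 with ht | ht
    · have : a = 0 := by rw [hadef, ← ht]; ring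
      rw [this, zero_mul]
      exact Real.pi_pos.le
    · -- t > 0
      have haD : a * D ≤ ∑ k : ZMod N,
          2 * Real.pi * t * (k.valMinAbs.natAbs : ℝ)
            * Real.exp (-(4 * t) * ((k.valMinAbs.natAbs : ℝ)) ^ 2) := by
        refine le_trans (mul_le_mul_of_nonneg_left hmaster ha0) ?_
        rw [Finset.mul_sum]
        refine Finset.sum_le_sum fun k _ => ?_
        have hch := char_bound (N := N) k ℓ
        have hex : Real.exp (t * (lam N dbar k).re)
            ≤ Real.exp (-(4 * t) * ((k.valMinAbs.natAbs : ℝ)) ^ 2) := by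
          apply Real.exp_le_exp.2
          have h1 := hre k
          have hcast : ((k.valMinAbs.natAbs : ℝ)) ^ 2 = ((k.valMinAbs : ℝ)) ^ 2 := by
            rw [Nat.cast_natAbs, Int.cast_abs, _root_.sq_abs]
          rw [hcast]
          calc t * (lam N dbar k).re ≤ t * (-(4 * ((k.valMinAbs : ℝ)) ^ 2)) :=
              mul_le_mul_of_nonneg_left h1 ht.le
            _ = -(4 * t) * ((k.valMinAbs : ℝ)) ^ 2 := by ring
        have hnn : (0:ℝ) ≤ 2 * Real.pi * |(k.valMinAbs : ℝ)| * |(ℓ : ℝ)| / N := by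
          positivity
        have hmain : a * ((N : ℝ)⁻¹ * ‖ZMod.stdAddChar (k * (ℓ : ZMod N)) - 1‖
              * Real.exp (t * (lam N dbar k).re))
            ≤ a * ((N : ℝ)⁻¹ * (2 * Real.pi * |(k.valMinAbs : ℝ)| * |(ℓ : ℝ)| / N)
              * Real.exp (-(4 * t) * ((k.valMinAbs.natAbs : ℝ)) ^ 2)) := by
          apply mul_le_mul_of_nonneg_left _ ha0
          apply mul_le_mul _ hex (Real.exp_pos _).le (by positivity)
          exact mul_le_mul_of_nonneg_left hch (by positivity)
        refine le_trans hmain (le_of_eq ?_)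
        have habsm : |(k.valMinAbs : ℝ)| = (k.valMinAbs.natAbs : ℝ) := by
          rw [Nat.cast_natAbs, Int.cast_abs]
        rw [hadef, habsm]
        have hNne : (N : ℝ) ≠ 0 := ne_of_gt hNpos
        have hlne : |(ℓ : ℝ)| ≠ 0 := ne_of_gt hlpos
        field_simp
      refine le_trans haD ?_
      have h2π : ∑ k : ZMod N,
          2 * Real.pi * t * (k.valMinAbs.natAbs : ℝ)
            * Real.exp (-(4 * t) * ((k.valMinAbs.natAbs : ℝ)) ^ 2)
          = 2 * Real.pi * t * ∑ k : ZMod N,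
            (k.valMinAbs.natAbs : ℝ) * Real.exp (-(4 * t) * ((k.valMinAbs.natAbs : ℝ)) ^ 2) := by
        rw [Finset.mul_sum]
        exact Finset.sum_congr rfl fun k _ => by ring
      rw [h2π]
      set g : ℕ → ℝ := fun m => (m : ℝ) * Real.exp (-(4 * t) * (m : ℝ) ^ 2) with hg
      have hg0 : ∀ m, 0 ≤ g m := fun m => by
        rw [hg]; positivity
      have hfiber := sum_fiber_le (N := N) g hg0
      have hgauss := sum_gauss_le ht (N / 2)
      calc 2 * Real.pi * t * ∑ k : ZMod N,
            (k.valMinAbs.natAbs : ℝ) * Real.exp (-(4 * t) * ((k.valMinAbs.natAbs : ℝ)) ^ 2)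
          = 2 * Real.pi * t * ∑ k : ZMod N, g (k.valMinAbs.natAbs) := rfl
        _ ≤ 2 * Real.pi * t * (2 * ∑ m ∈ Finset.range (N / 2 + 1), g m) := by
            apply mul_le_mul_of_nonneg_left hfiber (by positivity)
        _ ≤ 2 * Real.pi * t * (2 * (1 / (4 * t))) := by
            apply mul_le_mul_of_nonneg_left _ (by positivity)
            exact mul_le_mul_of_nonneg_left hgauss (by norm_num)
        _ = Real.pi := by
            field_simp
            ring
  -- Combine via interpolation in ν
  have hprod : (N : ℝ) ^ (2 * ν) * t ^ ν * |(ℓ : ℝ)| ^ (-ν) = a ^ ν := by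
    have h1 : (N : ℝ) ^ (2 * ν) = ((N : ℝ) ^ 2) ^ ν := by
      rw [← Real.rpow_natCast (N : ℝ) 2, ← Real.rpow_mul hNpos.le]
      norm_num
    have h2 : |(ℓ : ℝ)| ^ (-ν) = (|(ℓ : ℝ)|⁻¹) ^ ν := by
      rw [Real.rpow_neg (abs_nonneg _), ← Real.inv_rpow (abs_nonneg _)]
    rw [h1, h2, hadef, Real.mul_rpow (by positivity) (by positivity),
      Real.mul_rpow (by positivity) ht0]
  rw [hprod]
  rcases le_total a 1 with hA | hA
  · have hpow : a ^ ν ≤ 1 := Real.rpow_le_one ha0 hA hν0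
    calc a ^ ν * D ≤ 1 * D := mul_le_mul_of_nonneg_right hpow hD0
      _ = D := one_mul D
      _ ≤ 2 := hbound1
      _ ≤ 2 + Real.pi := by linarith [Real.pi_pos]
  · have hpow : a ^ ν ≤ a := by
      calc a ^ ν ≤ a ^ (1 : ℝ) := Real.rpow_le_rpow_of_exponent_le hA hν1
        _ = a := Real.rpow_one a
    calc a ^ ν * D ≤ a * D := mul_le_mul_of_nonneg_right hpow hD0
      _ ≤ Real.pi := hbound2
      _ ≤ 2 + Real.pi := by linarith
end
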